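/- Let n be even and F : F_2^n → F_2^n be a quadratic APN function with linearity L(F) = 2^{(n+l)/2} where l > n/2. Then F has exactly one component function of amplitude 2^{(n+l)/2}, and every other nontrivial component has amplitude at most 2^{(2n−l)/2}. In particular, any quadratic APN function on F_2^n has at most one component of amplitude strictly larger than 2^{3n/4}. -/

import Mathlib

open Finset

/-- `Vec n` is the vector space `F_2^n`. -/
abbrev Vec (n : ℕ) := Fin n → ZMod 2

/-- The standard dot product on `F_2^n`. -/
def dotp {n : ℕ} (a b : Vec n) : ZMod 2 := ∑ i, a i * b i

/-- The difference (derivative) function `D_{F,a}(x) = F(x) + F(x+a)`. -/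
def Dder {n : ℕ} (F : Vec n → Vec n) (a x : Vec n) : Vec n := F x + F (x + a)

/-- The linear hyperplane `H_b = {x : ⟨b,x⟩ = 0}`. -/
def Hyp {n : ℕ} (b : Vec n) : Set (Vec n) := {x | dotp b x = 0}

/-- The affine hyperplane `H̄_b = {x : ⟨b,x⟩ = 1}`. -/
def HypBar {n : ℕ} (b : Vec n) : Set (Vec n) := {x | dotp b x = 1}

/-- `T_b = {a : image(D_{F,a}) = H_b} ∪ {0}`. -/
def Tset {n : ℕ} (F : Vec n → Vec n) (b : Vec n) : Set (Vec n) :=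
  {a | Set.range (Dder F a) = Hyp b} ∪ {0}

/-- `T̄_b = {a : image(D_{F,a}) = H̄_b}`. -/
def TsetBar {n : ℕ} (F : Vec n → Vec n) (b : Vec n) : Set (Vec n) :=
  {a | Set.range (Dder F a) = HypBar b}

/-- `V_b = T_b ∪ T̄_b`. -/
def Vset {n : ℕ} (F : Vec n → Vec n) (b : Vec n) : Set (Vec n) := Tset F b ∪ TsetBar F b

/-- `F` is quadratic: all second derivatives are constant (algebraic degree ≤ 2). -/
def IsQuadratic {n m : ℕ} (F : Vec n → Vec m) : Prop :=
  ∀ a₁ a₂ : Vec n, ∃ c : Vec m, ∀ x, F (x + a₁ + a₂) + F (x + a₁) + F (x + a₂) + F x = c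

/-- `F` is APN: every equation `F(x) + F(x+a) = b`, `a ≠ 0`, has at most 2 solutions. -/
def IsAPN {n : ℕ} (F : Vec n → Vec n) : Prop :=
  ∀ a : Vec n, a ≠ 0 → ∀ b : Vec n, Nat.card {x : Vec n // F x + F (x + a) = b} ≤ 2

/-- The Walsh transform `W_F(b,a) = Σ_x (-1)^{⟨b,F(x)⟩ + ⟨a,x⟩}`. -/
def Walsh {n m : ℕ} (F : Vec n → Vec m) (b : Vec m) (a : Vec n) : ℤ :=
  ∑ x : Vec n, (-1 : ℤ) ^ ((dotp b (F x) + dotp a x).val)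

/-- The component `F_b` is bent: `|W_F(b,a)| = 2^{n/2}` for all `a`. -/
def IsBent {n m : ℕ} (F : Vec n → Vec m) (b : Vec m) : Prop :=
  ∀ a : Vec n, (Walsh F b a) ^ 2 = 2 ^ n

/-- The set `N_F` of non-trivial non-bent components of `F`. -/
def NF {n m : ℕ} (F : Vec n → Vec m) : Set (Vec m) := {b | b ≠ 0 ∧ ¬ IsBent F b}

/-- A vector space partition of `F_q^n`: a collection of nonzero subspaces such that
every nonzero vector lies in exactly one member. -/
def IsVSP {K : Type} [Field K] {n : ℕ} (𝒱 : Finset (Submodule K (Fin n → K))) : Prop :=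
  (∀ S ∈ 𝒱, S ≠ ⊥) ∧
  ∀ x : Fin n → K, x ≠ 0 → ∃! S : Submodule K (Fin n → K), S ∈ 𝒱 ∧ x ∈ S

/-- A blocking set of `PG(m,2)` (identified with `F_2^{m+1} \ {0}`) with respect to
`k`-spaces (nonzero parts of `(k+1)`-dimensional subspaces). -/
def PGBlocking (m k : ℕ) (B : Set (Fin (m + 1) → ZMod 2)) : Prop :=
  0 ∉ B ∧ ∀ S : Submodule (ZMod 2) (Fin (m + 1) → ZMod 2),
    Module.finrank (ZMod 2) S = k + 1 → ∃ x ∈ B, x ∈ S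

/-- `F_b` has amplitude `2^{(n+k)/2}`. -/
def HasAmp {n m : ℕ} (F : Vec n → Vec m) (b : Vec m) (k : ℕ) : Prop :=
  (∀ a, (Walsh F b a) ^ 2 = 0 ∨ (Walsh F b a) ^ 2 = 2 ^ (n + k)) ∧
  ∃ a, (Walsh F b a) ^ 2 = 2 ^ (n + k)

namespace Stmt8

variable {n : ℕ}

variable {n : ℕ}

def E (p : ZMod 2) : ℤ := (-1) ^ p.val

lemma E_add (p q : ZMod 2) : E (p + q) = E p * E q := by revert p q; decide

lemma E_cancel {p q : ZMod 2} (h : p + q = 1) : E p + E q = 0 := by revert p q; decide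

lemma dotp_add_right (b x y : Vec n) : dotp b (x + y) = dotp b x + dotp b y := by
  simp [dotp, mul_add, Finset.sum_add_distrib]

lemma dotp_zero_right (b : Vec n) : dotp b 0 = 0 := by simp [dotp]

lemma vadd_self (v : Vec n) : v + v = 0 := by
  funext i
  have : ∀ p : ZMod 2, p + p = 0 := by decide
  simpa using this (v i)

def LSf (f : Vec n → ZMod 2) : Finset (Vec n) :=
  Finset.univ.filter (fun a => ∀ x, f x + f (x + a) = f 0 + f a)

lemma mem_LSf {f : Vec n → ZMod 2} {a : Vec n} :
    a ∈ LSf f ↔ ∀ x, f x + f (x + a) = f 0 + f a := by simp [LSf]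

lemma add_mem_LSf {f : Vec n → ZMod 2} {u v : Vec n} (hu : u ∈ LSf f) (hv : v ∈ LSf f) :
    u + v ∈ LSf f := by
  rw [mem_LSf] at hu hv ⊢
  intro x
  have h2 := hv (x + u)
  rw [add_assoc x u v] at h2
  have key : ∀ A B C D e G H : ZMod 2, A + B = D + e → B + C = D + G → e + H = D + G →
      A + C = D + H := by decide
  exact key _ _ _ _ _ _ _ (hu x) h2 (hv u)

lemma dotp_add4 (b p q r s : Vec n) :
    dotp b (p + q + r + s) = dotp b p + dotp b q + dotp b r + dotp b s := by
  simp only [dotp_add_right]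

lemma quad4 {F : Vec n → Vec n} (hq : IsQuadratic F) (b x y u : Vec n) :
    dotp b (F (x + y + u)) + dotp b (F (x + u)) + dotp b (F (y + u)) + dotp b (F u)
      = dotp b (F (x + y)) + dotp b (F x) + dotp b (F y) + dotp b (F 0) := by
  obtain ⟨c, hc⟩ := hq x y
  have h1 := congrArg (dotp b) (hc u)
  have h2 := congrArg (dotp b) (hc 0)
  rw [show u + x + y = x + y + u from by ring, show u + x = x + u from by ring,
    show u + y = y + u from by ring] at h1
  simp only [zero_add] at h2
  rw [dotp_add4] at h1 h2
  exact h1.trans h2.symm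

lemma card_vec : Fintype.card (Vec n) = 2 ^ n := by simp [Fintype.card_fun]

lemma walsh_sq_eq (F : Vec n → Vec n) (hq : IsQuadratic F) (b a : Vec n) :
    (Walsh F b a) ^ 2 = 0 ∨
      (Walsh F b a) ^ 2 = 2 ^ n * ((LSf (fun x => dotp b (F x))).card : ℤ) := by
  set f : Vec n → ZMod 2 := fun x => dotp b (F x) with hf
  have hW : Walsh F b a = ∑ x : Vec n, E (f x + dotp a x) := rfl
  have step1 : (Walsh F b a) ^ 2
      = ∑ u : Vec n, ∑ x : Vec n, E (f x + f (x + u) + dotp a u) := by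
    rw [sq, hW, Finset.sum_mul_sum]
    rw [show (∑ x : Vec n, ∑ y : Vec n, E (f x + dotp a x) * E (f y + dotp a y))
        = ∑ x : Vec n, ∑ u : Vec n, E (f x + f (x + u) + dotp a u) from
      Finset.sum_congr rfl fun x _ => (Fintype.sum_equiv (Equiv.addLeft x)
        (fun u => E (f x + f (x + u) + dotp a u))
        (fun y => E (f x + dotp a x) * E (f y + dotp a y))
        (fun u => by
          show E (f x + f (x + u) + dotp a u)
            = E (f x + dotp a x) * E (f (x + u) + dotp a (x + u))
          rw [← E_add]
          congr 1
          rw [dotp_add_right]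
          have key : ∀ A B C D : ZMod 2, A + B + D = A + C + (B + (C + D)) := by decide
          exact key _ _ _ _)).symm]
    exact Finset.sum_comm
  have hnot : ∀ u ∈ Finset.univ.filter (fun u : Vec n => ¬ u ∈ LSf f),
      (∑ x : Vec n, E (f x + f (x + u) + dotp a u)) = 0 := by
    intro u hu
    rw [Finset.mem_filter, mem_LSf] at hu
    push_neg at hu
    obtain ⟨x₀, hx₀⟩ := hu.2
    apply Finset.sum_involution (fun x _ => x + x₀)
    · intro x _
      apply E_cancel
      have key : ∀ A B C D G H Z U d : ZMod 2,
          H + B + D + U = G + A + C + Z → ¬ (C + D = Z + U) →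
          (A + B + d) + (G + H + d) = 1 := by decide
      exact key (f x) (f (x + u)) (f x₀) (f (x₀ + u)) (f (x + x₀)) (f (x + x₀ + u))
        (f 0) (f u) (dotp a u) (quad4 hq b x x₀ u) hx₀
    · intro x _ _ hxx
      have hx0 : x₀ = 0 := by
        have h : x + x₀ = x + 0 := by rw [add_zero]; exact hxx
        exact add_left_cancel h
      rw [hx0, zero_add] at hx₀
      exact hx₀ rfl
    · intro x _; exact Finset.mem_univ _
    · intro x _; rw [add_assoc, vadd_self, add_zero]
  have hyes : ∀ u ∈ Finset.univ.filter (fun u : Vec n => u ∈ LSf f),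
      (∑ x : Vec n, E (f x + f (x + u) + dotp a u))
        = 2 ^ n * E (f 0 + f u + dotp a u) := by
    intro u hu
    rw [Finset.mem_filter] at hu
    have hu' := mem_LSf.mp hu.2
    calc ∑ x : Vec n, E (f x + f (x + u) + dotp a u)
        = ∑ _x : Vec n, E (f 0 + f u + dotp a u) :=
          Finset.sum_congr rfl fun x _ => by rw [hu' x]
      _ = 2 ^ n * E (f 0 + f u + dotp a u) := by
          rw [Finset.sum_const, Finset.card_univ, card_vec, nsmul_eq_mul]
          push_cast; ring
  have step2 : (Walsh F b a) ^ 2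
      = 2 ^ n * ∑ u ∈ LSf f, E (f 0 + f u + dotp a u) := by
    rw [step1, ← Finset.sum_filter_add_sum_filter_not Finset.univ (fun u : Vec n => u ∈ LSf f)]
    rw [Finset.sum_congr rfl hnot, Finset.sum_const, smul_zero, add_zero]
    rw [Finset.sum_congr rfl hyes, Finset.filter_univ_mem, Finset.mul_sum]
  by_cases hz : ∀ u ∈ LSf f, f 0 + f u + dotp a u = 0
  · right
    rw [step2]
    congr 1
    calc ∑ u ∈ LSf f, E (f 0 + f u + dotp a u) = ∑ u ∈ LSf f, 1 :=
        Finset.sum_congr rfl fun u hu => by rw [hz u hu]; rfl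
      _ = ((LSf f).card : ℤ) := by rw [Finset.sum_const]; simp
  · left
    push_neg at hz
    obtain ⟨u₀, hu₀mem, hu₀⟩ := hz
    have h1 : f 0 + f u₀ + dotp a u₀ = 1 := by
      have : ∀ p : ZMod 2, p ≠ 0 → p = 1 := by decide
      exact this _ hu₀
    have hu₀ne : u₀ ≠ 0 := by
      intro h
      rw [h, dotp_zero_right] at h1
      have : ∀ p : ZMod 2, ¬ (p + p + 0 = 1) := by decide
      exact this _ h1
    rw [step2]
    have : (∑ u ∈ LSf f, E (f 0 + f u + dotp a u)) = 0 := by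
      apply Finset.sum_involution (fun u _ => u + u₀)
      · intro u hu
        apply E_cancel
        rw [dotp_add_right]
        have key : ∀ Z U S' U0 dU dU0 : ZMod 2, U + S' = Z + U0 → Z + U0 + dU0 = 1 →
            (Z + U + dU) + (Z + S' + (dU + dU0)) = 1 := by decide
        exact key _ _ _ _ _ _ (mem_LSf.mp hu₀mem u) h1
      · intro u _ _ hxx
        apply hu₀ne
        have := congrArg (fun z => z + u) hxx
        simpa [add_assoc, add_comm, add_left_comm, vadd_self] using this
      · intro u hu; exact add_mem_LSf hu hu₀mem
      · intro u _; rw [add_assoc, vadd_self, add_zero]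
    rw [this, mul_zero]

lemma char2_rearr (u v u' v' : Vec n) (h : u + v = u' + v') : u + u' = v + v' := by
  have h' := congrArg (fun z => z + (u' + v)) h
  calc u + u' = u + v + (u' + v) := by
        rw [show u + v + (u' + v) = u + u' + (v + v) from by ring, vadd_self, add_zero]
    _ = u' + v' + (u' + v) := h'
    _ = v + v' := by
        rw [show u' + v' + (u' + v) = v + v' + (u' + u') from by ring, vadd_self, add_zero]

lemma eq_of_add_eq_zero' {u v : Vec n} (h : u + v = 0) : u = v := by
  have h' := congrArg (fun z => z + v) h
  rw [add_assoc, vadd_self, add_zero, zero_add] at h'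
  exact h'

lemma dotp_single (b : Vec n) (i : Fin n) : dotp b (Pi.single i 1) = b i := by
  rw [dotp, Finset.sum_eq_single i]
  · simp
  · intro j _ hj; simp [Pi.single_eq_of_ne hj]
  · intro h; exact absurd (Finset.mem_univ i) h

lemma exists_dotp_one_zero {b₁ b₂ : Vec n} (h1 : b₁ ≠ 0) (hne : b₁ ≠ b₂) :
    ∃ z, dotp b₁ z = 1 ∧ dotp b₂ z = 0 := by
  by_contra h
  push_neg at h
  have hone : ∀ p : ZMod 2, p ≠ 0 → p = 1 := by decide
  have : ∃ i, b₁ i ≠ 0 := by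
    by_contra hc; push_neg at hc; exact h1 (funext fun i => hc i)
  obtain ⟨i, hi⟩ := this
  have hz₀ : dotp b₁ (Pi.single i 1) = 1 := by rw [dotp_single]; exact hone _ hi
  have hb₂z₀ : dotp b₂ (Pi.single i 1) = 1 := hone _ (h _ hz₀)
  have hall : ∀ z, dotp b₂ z = dotp b₁ z := by
    intro z
    by_cases hz : dotp b₁ z = 1
    · rw [hz]; exact hone _ (h z hz)
    · have hz' : dotp b₁ z = 0 := by
        revert hz; generalize dotp b₁ z = p; revert p; decide
      rw [hz']
      have h2 : dotp b₁ (z + Pi.single i 1) = 1 := by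
        rw [dotp_add_right, hz', hz₀, zero_add]
      have h3 := hone _ (h _ h2)
      rw [dotp_add_right, hb₂z₀] at h3
      have : ∀ p : ZMod 2, p + 1 = 1 → p = 0 := by decide
      exact this _ h3
  apply hne
  funext j
  have hj := hall (Pi.single j 1)
  rw [dotp_single, dotp_single] at hj
  exact hj.symm

lemma LS_disjoint (F : Vec n → Vec n) (haF : IsAPN F) {b₁ b₂ a : Vec n}
    (h1 : b₁ ≠ 0) (h2 : b₂ ≠ 0) (hne : b₁ ≠ b₂)
    (m1 : a ∈ LSf (fun x => dotp b₁ (F x))) (m2 : a ∈ LSf (fun x => dotp b₂ (F x))) :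
    a = 0 := by
  by_contra hane
  obtain ⟨z₁, hz₁⟩ := exists_dotp_one_zero h1 hne
  obtain ⟨z₂, hz₂⟩ := exists_dotp_one_zero h2 (Ne.symm hne)
  set D : Vec n → Vec n := fun x => F x + F (x + a) with hD
  set e₁ := dotp b₁ (F 0) + dotp b₁ (F a) with he₁
  set e₂ := dotp b₂ (F 0) + dotp b₂ (F a) with he₂
  have hDmem : ∀ x, dotp b₁ (D x) = e₁ ∧ dotp b₂ (D x) = e₂ := by
    intro x
    constructor
    · rw [hD]; rw [dotp_add_right]; exact mem_LSf.mp m1 x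
    · rw [hD]; rw [dotp_add_right]; exact mem_LSf.mp m2 x
  set K : Finset (Vec n) :=
    Finset.univ.filter (fun y => dotp b₁ y = e₁ ∧ dotp b₂ y = e₂) with hK
  set Im : Finset (Vec n) := Finset.image D Finset.univ with hIm
  have hImK : Im ⊆ K := by
    intro y hy
    rw [hIm, Finset.mem_image] at hy
    obtain ⟨x, _, rfl⟩ := hy
    rw [hK, Finset.mem_filter]
    exact ⟨Finset.mem_univ _, hDmem x⟩
  have hfib : ∀ y ∈ Im, (Finset.univ.filter (fun x => D x = y)).card = 2 := by
    intro y hy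
    obtain ⟨x₀, _, hx₀⟩ := Finset.mem_image.mp hy
    apply le_antisymm
    · have h := haF a hane y
      rw [Nat.card_eq_fintype_card, Fintype.card_subtype] at h
      exact h
    · have hsub : ({x₀, x₀ + a} : Finset (Vec n)) ⊆
          Finset.univ.filter (fun x => D x = y) := by
        intro t ht
        rw [Finset.mem_insert, Finset.mem_singleton] at ht
        rw [Finset.mem_filter]
        rcases ht with rfl | rfl
        · exact ⟨Finset.mem_univ _, hx₀⟩
        · refine ⟨Finset.mem_univ _, ?_⟩
          show F (x₀ + a) + F (x₀ + a + a) = y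
          rw [add_assoc, vadd_self, add_zero, add_comm]
          exact hx₀
      have hcard : ({x₀, x₀ + a} : Finset (Vec n)).card = 2 := by
        rw [Finset.card_insert_of_notMem, Finset.card_singleton]
        rw [Finset.mem_singleton]
        intro hc
        apply hane
        have : x₀ + a = x₀ + 0 := by rw [add_zero]; exact hc.symm
        exact add_left_cancel this
      exact le_trans (le_of_eq hcard.symm) (Finset.card_le_card hsub)
  have hcount : 2 * Im.card = 2 ^ n := by
    have hmaps : ∀ x ∈ (Finset.univ : Finset (Vec n)), D x ∈ Im :=
      fun x _ => Finset.mem_image_of_mem D (Finset.mem_univ x)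
    have hcc := Finset.card_eq_sum_card_fiberwise hmaps
    rw [Finset.card_univ, card_vec] at hcc
    rw [hcc, Finset.sum_congr rfl hfib, Finset.sum_const, smul_eq_mul, mul_comm]
  -- 4 * K.card ≤ 2 ^ n
  set T : Vec n × (ZMod 2 × ZMod 2) → Vec n :=
    fun p => p.1 + ((if p.2.1 = 1 then z₁ else 0) + (if p.2.2 = 1 then z₂ else 0)) with hT
  have hT1 : ∀ p : Vec n × (ZMod 2 × ZMod 2),
      dotp b₁ (T p) = dotp b₁ p.1 + (if p.2.1 = 1 then 1 else 0) := by
    intro p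
    rw [hT]
    simp only
    rw [dotp_add_right, dotp_add_right, apply_ite (dotp b₁), apply_ite (dotp b₁),
      hz₁.1, hz₂.2, dotp_zero_right]
    simp
  have hT2 : ∀ p : Vec n × (ZMod 2 × ZMod 2),
      dotp b₂ (T p) = dotp b₂ p.1 + (if p.2.2 = 1 then 1 else 0) := by
    intro p
    rw [hT]
    simp only
    rw [dotp_add_right, dotp_add_right, apply_ite (dotp b₂), apply_ite (dotp b₂),
      hz₁.2, hz₂.1, dotp_zero_right]
    simp
  have hKcard : K.card * 4 ≤ 2 ^ n := by
    have hle : (K ×ˢ (Finset.univ : Finset (ZMod 2 × ZMod 2))).card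
        ≤ (Finset.univ : Finset (Vec n)).card := by
      apply Finset.card_le_card_of_injOn T (fun _ _ => Finset.mem_univ _)
      intro p hp q hq heq
      simp only [Finset.coe_product, Set.mem_prod, Finset.mem_coe] at hp hq
      have hpK := Finset.mem_filter.mp hp.1
      have hqK := Finset.mem_filter.mp hq.1
      have key : ∀ e s t : ZMod 2,
          e + (if s = 1 then 1 else 0) = e + (if t = 1 then 1 else 0) → s = t := by decide
      have hc1 : p.2.1 = q.2.1 := by
        apply key e₁
        calc e₁ + (if p.2.1 = 1 then 1 else 0)
            = dotp b₁ p.1 + (if p.2.1 = 1 then 1 else 0) := by rw [hpK.2.1]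
          _ = dotp b₁ (T p) := (hT1 p).symm
          _ = dotp b₁ (T q) := by rw [heq]
          _ = dotp b₁ q.1 + (if q.2.1 = 1 then 1 else 0) := hT1 q
          _ = e₁ + (if q.2.1 = 1 then 1 else 0) := by rw [hqK.2.1]
      have hc2 : p.2.2 = q.2.2 := by
        apply key e₂
        calc e₂ + (if p.2.2 = 1 then 1 else 0)
            = dotp b₂ p.1 + (if p.2.2 = 1 then 1 else 0) := by rw [hpK.2.2]
          _ = dotp b₂ (T p) := (hT2 p).symm
          _ = dotp b₂ (T q) := by rw [heq]
          _ = dotp b₂ q.1 + (if q.2.2 = 1 then 1 else 0) := hT2 q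
          _ = e₂ + (if q.2.2 = 1 then 1 else 0) := by rw [hqK.2.2]
      have hc : p.2 = q.2 := Prod.ext hc1 hc2
      have hy : p.1 = q.1 := by
        have := heq
        rw [hT] at this
        simp only at this
        rw [hc] at this
        exact add_right_cancel this
      exact Prod.ext hy hc
    rw [Finset.card_product, Finset.card_univ, Finset.card_univ, card_vec] at hle
    have h4 : Fintype.card (ZMod 2 × ZMod 2) = 4 := by simp
    rw [h4] at hle
    exact hle
  have hImne : 1 ≤ Im.card := by
    have : D 0 ∈ Im := Finset.mem_image_of_mem D (Finset.mem_univ 0)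
    exact Finset.card_pos.mpr ⟨_, this⟩
  have hc2 : Im.card ≤ K.card := Finset.card_le_card hImK
  have hchain : 4 * Im.card ≤ 2 * Im.card := by
    calc 4 * Im.card ≤ 4 * K.card := by omega
      _ = K.card * 4 := by ring
      _ ≤ 2 ^ n := hKcard
      _ = 2 * Im.card := hcount.symm
  omega

lemma LS_prod_le (F : Vec n → Vec n) (haF : IsAPN F) {b₁ b₂ : Vec n}
    (h1 : b₁ ≠ 0) (h2 : b₂ ≠ 0) (hne : b₁ ≠ b₂) :
    (LSf (fun x => dotp b₁ (F x))).card * (LSf (fun x => dotp b₂ (F x))).card ≤ 2 ^ n := by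
  have hle : ((LSf (fun x => dotp b₁ (F x))) ×ˢ (LSf (fun x => dotp b₂ (F x)))).card
      ≤ (Finset.univ : Finset (Vec n)).card := by
    apply Finset.card_le_card_of_injOn (fun p => p.1 + p.2) (fun _ _ => Finset.mem_univ _)
    intro p hp q hq heq
    simp only [Finset.coe_product, Set.mem_prod, Finset.mem_coe] at hp hq
    simp only at heq
    have hw : p.1 + q.1 = p.2 + q.2 := char2_rearr _ _ _ _ heq
    have hw1 : p.1 + q.1 ∈ LSf (fun x => dotp b₁ (F x)) := add_mem_LSf hp.1 hq.1
    have hw2 : p.1 + q.1 ∈ LSf (fun x => dotp b₂ (F x)) := by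
      rw [hw]; exact add_mem_LSf hp.2 hq.2
    have hw0 : p.1 + q.1 = 0 := LS_disjoint F haF h1 h2 hne hw1 hw2
    have h1' : p.1 = q.1 := eq_of_add_eq_zero' hw0
    have h2' : p.2 = q.2 := by
      rw [h1'] at heq
      exact add_left_cancel heq
    exact Prod.ext h1' h2'
  rw [Finset.card_product, Finset.card_univ, card_vec] at hle
  exact hle

end Stmt8

theorem stmt_8 {n : ℕ} (hn : Even n) (F : Vec n → Vec n) (hq : IsQuadratic F)
    (ha : IsAPN F) (l : ℕ) (hl : n / 2 < l)
    (hlin : (∀ b : Vec n, b ≠ 0 → ∀ a, (Walsh F b a) ^ 2 ≤ 2 ^ (n + l)) ∧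
      ∃ b : Vec n, b ≠ 0 ∧ ∃ a, (Walsh F b a) ^ 2 = 2 ^ (n + l)) :
    (∃! b : {b : Vec n // b ≠ 0}, ∃ a, (Walsh F b.1 a) ^ 2 = 2 ^ (n + l)) ∧
    (∀ b : Vec n, b ≠ 0 → (¬ ∃ a, (Walsh F b a) ^ 2 = 2 ^ (n + l)) →
      ∀ a, (Walsh F b a) ^ 2 ≤ 2 ^ (2 * n - l)) ∧
    (∀ b₁ b₂ : Vec n, b₁ ≠ 0 → b₂ ≠ 0 →
      (∃ a, (2 : ℤ) ^ (3 * n / 2) < (Walsh F b₁ a) ^ 2) →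
      (∃ a, (2 : ℤ) ^ (3 * n / 2) < (Walsh F b₂ a) ^ 2) → b₁ = b₂) := by

  classical
  obtain ⟨hub, b₀, hb₀, a₀, ha₀⟩ := hlin
  obtain ⟨m, hm⟩ := hn
  set c : Vec n → ℕ := fun b => (Stmt8.LSf (fun x => dotp b (F x))).card with hcdef
  have key : ∀ b a : Vec n, (Walsh F b a) ^ 2 = 0 ∨ (Walsh F b a) ^ 2 = 2 ^ n * (c b : ℤ) :=
    fun b a => Stmt8.walsh_sq_eq F hq b a
  have prodle : ∀ b₁ b₂ : Vec n, b₁ ≠ 0 → b₂ ≠ 0 → b₁ ≠ b₂ → c b₁ * c b₂ ≤ 2 ^ n :=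
    fun b₁ b₂ h1 h2 hne => Stmt8.LS_prod_le F ha h1 h2 hne
  have hach : ∀ b a : Vec n, (Walsh F b a) ^ 2 = 2 ^ (n + l) → c b = 2 ^ l := by
    intro b a hW
    rcases key b a with h | h
    · exfalso
      have hne0 : (2 : ℤ) ^ (n + l) ≠ 0 := by positivity
      exact hne0 (hW.symm.trans h)
    · rw [h] at hW
      have h2 : (2 : ℤ) ^ n * (c b : ℤ) = 2 ^ n * 2 ^ l := by rw [hW, pow_add]
      have h3 : (c b : ℤ) = 2 ^ l := mul_left_cancel₀ (by positivity) h2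
      exact_mod_cast h3
  have hc₀ : c b₀ = 2 ^ l := hach b₀ a₀ ha₀
  have hln : l ≤ n := by
    have hle : c b₀ ≤ 2 ^ n := by
      have := Finset.card_le_card (Finset.subset_univ (Stmt8.LSf (fun x => dotp b₀ (F x))))
      rwa [Finset.card_univ, Stmt8.card_vec] at this
    rw [hc₀] at hle
    exact (Nat.pow_le_pow_iff_right one_lt_two).mp hle
  refine ⟨⟨⟨b₀, hb₀⟩, ⟨a₀, ha₀⟩, ?_⟩, ?_, ?_⟩
  · rintro ⟨b, hb⟩ ⟨a, haW⟩
    apply Subtype.ext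
    show b = b₀
    by_contra hne
    have hcy := hach b a haW
    have hp := prodle b b₀ hb hb₀ hne
    rw [hcy, hc₀, ← pow_add] at hp
    have h2l : l + l ≤ n := (Nat.pow_le_pow_iff_right one_lt_two).mp hp
    omega
  · intro b hb hnach a
    have hbne : b ≠ b₀ := by rintro rfl; exact hnach ⟨a₀, ha₀⟩
    have hprod := prodle b b₀ hb hb₀ hbne
    rw [hc₀] at hprod
    have hcb : c b ≤ 2 ^ (n - l) := by
      have h2 : 2 ^ (n - l) * 2 ^ l = 2 ^ n := by rw [← pow_add]; congr 1; omega
      exact Nat.le_of_mul_le_mul_right (by rw [h2]; exact hprod) (Nat.two_pow_pos l)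
    rcases key b a with h | h
    · rw [h]; positivity
    · rw [h]
      calc (2 : ℤ) ^ n * (c b : ℤ) ≤ 2 ^ n * 2 ^ (n - l) := by
            have hc' : (c b : ℤ) ≤ 2 ^ (n - l) := by exact_mod_cast hcb
            exact mul_le_mul_of_nonneg_left hc' (by positivity)
        _ = 2 ^ (2 * n - l) := by rw [← pow_add]; congr 1; omega
  · rintro b₁ b₂ h1 h2 ⟨a₁, hw1⟩ ⟨a₂, hw2⟩
    by_contra hne
    have hgt : ∀ b a' : Vec n, (2 : ℤ) ^ (3 * n / 2) < (Walsh F b a') ^ 2 →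
        2 ^ (n / 2) < c b := by
      intro b a' hgt'
      rcases key b a' with h | h
      · rw [h] at hgt'
        exact absurd hgt' (not_lt.mpr (by positivity))
      · rw [h] at hgt'
        have h3 : (2 : ℤ) ^ (3 * n / 2) = 2 ^ n * 2 ^ (n / 2) := by
          rw [← pow_add]; congr 1; omega
        rw [h3] at hgt'
        have hpos : (0 : ℤ) < 2 ^ n := by positivity
        have hcast : (2 : ℤ) ^ (n / 2) < (c b : ℤ) := (mul_lt_mul_iff_right₀ hpos).mp hgt'
        exact_mod_cast hcast
    have g1 := hgt b₁ a₁ hw1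
    have g2 := hgt b₂ a₂ hw2
    have hp := prodle b₁ b₂ h1 h2 hne
    have hlt : 2 ^ n < c b₁ * c b₂ := by
      calc 2 ^ n = 2 ^ (n / 2) * 2 ^ (n / 2) := by rw [← pow_add]; congr 1; omega
        _ < c b₁ * c b₂ := Nat.mul_lt_mul'' g1 g2
    omega
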